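/- Let H be a Hilbert space, T ∈ B(H) a bounded operator, X a nonempty set, and φ: X → B(H) a map. The following are equivalent: (1) for every n ≥ 1 and all vectors ξ_1,…,ξ_n ∈ H and η_1,…,η_n ∈ H, there exists x ∈ X such that ∑_{i=1}^n ‖φ(x)ξ_i − Tξ_i‖² ≤ ∑_{i=1}^n ‖φ(x)ξ_i − η_i‖²; (2) T belongs to the closure of the convex hull of {φ(x) : x ∈ X} with respect to the strong operator topology on B(H). -/

import Mathlib

set_option maxHeartbeats 1000000
set_option synthInstance.maxHeartbeats 1000000

open RCLike

lemma aux_sq_diff {H : Type*} [NormedAddCommGroup H] [InnerProductSpace ℂ H]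
    (w t e : H) :
    ‖w - t‖ ^ 2 - ‖w - e‖ ^ 2
      = ‖t‖ ^ 2 - ‖e‖ ^ 2 - 2 * re (inner ℂ w (t - e)) := by
  rw [@norm_sub_sq ℂ, @norm_sub_sq ℂ, inner_sub_right, map_sub]
  ring

lemma aux_affine {H : Type*} [NormedAddCommGroup H] [InnerProductSpace ℂ H]
    (a b : ℝ) (u v w : H) :
    re (inner ℂ (a • u + b • v) w) = a * re (inner ℂ u w) + b * re (inner ℂ v w) := by
  rw [inner_add_left, RCLike.real_smul_eq_coe_smul (K := ℂ) a,
    RCLike.real_smul_eq_coe_smul (K := ℂ) b, inner_smul_left, inner_smul_left, map_add]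
  simp

theorem stmt_2 {H : Type*} [NormedAddCommGroup H] [InnerProductSpace ℂ H] [CompleteSpace H]
    {X : Type*} [Nonempty X] (T : H →L[ℂ] H) (φ : X → H →L[ℂ] H) :
    (∀ n : ℕ, 1 ≤ n → ∀ ξ η : Fin n → H, ∃ x : X,
        ∑ i, ‖φ x (ξ i) - T (ξ i)‖ ^ 2 ≤ ∑ i, ‖φ x (ξ i) - η i‖ ^ 2) ↔
      (⇑T : H → H) ∈ closure ((fun A : H →L[ℂ] H => (⇑A : H → H)) ''
        convexHull ℝ (Set.range φ)) := by
  constructor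
  · -- (1) → (2)
    intro h1
    by_contra hc
    set D : Set (H → H) :=
      (fun A : H →L[ℂ] H => (⇑A : H → H)) '' convexHull ℝ (Set.range φ) with hD
    obtain ⟨x₀⟩ := ‹Nonempty X›
    have hDne : (⇑(φ x₀) : H → H) ∈ D :=
      ⟨φ x₀, subset_convexHull ℝ _ ⟨x₀, rfl⟩, rfl⟩
    rw [mem_closure_iff_nhds] at hc
    push_neg at hc
    obtain ⟨t, ht, htD⟩ := hc
    rw [nhds_pi, Filter.mem_pi] at ht
    obtain ⟨I, hIfin, V, hV, hpi⟩ := ht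
    choose ε hεpos hεball using fun ξ : H => Metric.mem_nhds_iff.mp (hV ξ)
    by_cases hI : I.Nonempty
    swap
    · exact Set.eq_empty_iff_forall_notMem.mp htD ⇑(φ x₀)
        ⟨hpi fun ξ hξ => absurd ⟨ξ, hξ⟩ hI, hDne⟩
    · set s : Finset H := hIfin.toFinset with hs_def
      have hs : s.Nonempty := by
        obtain ⟨ξ, hξ⟩ := hI
        exact ⟨ξ, hIfin.mem_toFinset.mpr hξ⟩
      set n := s.card with hn_def
      have hn : 1 ≤ n := Finset.card_pos.mpr hs
      have hlen : s.toList.length = n := Finset.length_toList s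
      set ξv : Fin n → H := fun i => s.toList.get (Fin.cast hlen.symm i) with hξv
      have hsurj : ∀ ξ ∈ I, ∃ i : Fin n, ξv i = ξ := by
        intro ξ hξ
        have : ξ ∈ s.toList := Finset.mem_toList.mpr (hIfin.mem_toFinset.mpr hξ)
        obtain ⟨j, hj⟩ := List.mem_iff_get.mp this
        exact ⟨Fin.cast hlen j, by simpa [hξv] using hj⟩
      set ε0 : ℝ := s.inf' hs ε with hε0_def
      have hε0 : 0 < ε0 := by
        rw [hε0_def, Finset.lt_inf'_iff]
        exact fun ξ _ => hεpos ξ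
      -- ℓ² space
      set E := PiLp 2 (fun _ : Fin n => H) with hE
      set e : (H → H) → E := fun f => (WithLp.equiv 2 _).symm fun i => f (ξv i) with he
      set v : E := e ⇑T with hv
      -- coordinate values
      have hcoord : ∀ (f g : H → H) (i : Fin n),
          (e f - e g) i = f (ξv i) - g (ξv i) := fun f g i => rfl
      -- coordinate ≤ norm in PiLp 2
      have hcoord_le : ∀ (z : E) (i : Fin n), ‖z i‖ ≤ ‖z‖ := by
        intro z i
        have h2 : ‖z i‖ ^ 2 ≤ ‖z‖ ^ 2 := by
          rw [PiLp.norm_sq_eq_of_L2]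
          exact Finset.single_le_sum (f := fun j => ‖z j‖ ^ 2)
            (fun j _ => by positivity) (Finset.mem_univ i)
        exact (pow_le_pow_iff_left₀ (norm_nonneg _) (norm_nonneg _) two_ne_zero).mp h2
      -- distance bound from v to e '' D
      have hkey : ∀ f ∈ D, ε0 ≤ ‖e f - v‖ := by
        intro f hf
        have hft : f ∉ t := fun h => Set.eq_empty_iff_forall_notMem.mp htD f ⟨h, hf⟩
        have : f ∉ I.pi V := fun h => hft (hpi h)
        rw [Set.mem_pi] at this
        push_neg at this
        obtain ⟨ξ, hξI, hξV⟩ := this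
        obtain ⟨i, rfl⟩ := hsurj ξ hξI
        have hb : ε (ξv i) ≤ dist (f (ξv i)) (T (ξv i)) := by
          by_contra hlt
          push_neg at hlt
          exact hξV (hεball _ (Metric.mem_ball.mpr hlt))
        have h1' : ε0 ≤ ε (ξv i) :=
          Finset.inf'_le _ (hIfin.mem_toFinset.mpr hξI)
        calc ε0 ≤ ε (ξv i) := h1'
          _ ≤ dist (f (ξv i)) (T (ξv i)) := hb
          _ = ‖(e f - v) i‖ := by rw [hcoord]; exact dist_eq_norm _ _
          _ ≤ ‖e f - v‖ := hcoord_le _ i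
      -- convexity of e '' D
      have hL : ∃ L : (H →L[ℂ] H) →ₗ[ℝ] E, ∀ A : H →L[ℂ] H, L A = e ⇑A := by
        exact ⟨⟨⟨fun A => e ⇑A, fun A B => rfl⟩, fun c A => rfl⟩, fun A => rfl⟩
      obtain ⟨L, hLa⟩ := hL
      have himg : e '' D = L '' convexHull ℝ (Set.range φ) := by
        rw [hD, Set.image_image]
        exact Set.image_congr fun A _ => (hLa A).symm
      have hconvK : Convex ℝ (closure (e '' D)) := by
        rw [himg]
        exact ((convex_convexHull ℝ _).linear_image L).closure
      have hKne : (closure (e '' D)).Nonempty :=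
        ⟨e ⇑(φ x₀), subset_closure ⟨_, hDne, rfl⟩⟩
      haveI : CompleteSpace E :=
        inferInstanceAs (CompleteSpace (PiLp 2 fun _ : Fin n => H))
      have hKcomp : IsComplete (closure (e '' D)) :=
        isClosed_closure.isComplete
      -- projection
      letI : InnerProductSpace ℝ E := InnerProductSpace.rclikeToReal ℂ E
      obtain ⟨η, hηK, hηmin⟩ :=
        exists_norm_eq_iInf_of_complete_convex hKne hKcomp hconvK v
      have hchar := (norm_eq_iInf_iff_real_inner_le_zero hconvK hηK).mp hηmin
      have hηdist : ε0 ≤ ‖v - η‖ := by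
        have hcl : closure (e '' D) ⊆ {w : E | ε0 ≤ ‖v - w‖} := by
          apply closure_minimal
          · rintro _ ⟨f, hf, rfl⟩
            have := hkey f hf
            rwa [← norm_neg, neg_sub] at this
          · exact isClosed_le continuous_const (by fun_prop)
        exact hcl hηK
      -- apply hypothesis
      obtain ⟨x, hx⟩ := h1 n hn ξv fun i => (WithLp.equiv 2 _) η i
      set u : E := e ⇑(φ x) with hu
      have huD : u ∈ closure (e '' D) :=
        subset_closure ⟨⇑(φ x), ⟨φ x, subset_convexHull ℝ _ ⟨x, rfl⟩, rfl⟩, rfl⟩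
      have hsum1 : ∑ i, ‖φ x (ξv i) - T (ξv i)‖ ^ 2 = ‖u - v‖ ^ 2 := by
        rw [PiLp.norm_sq_eq_of_L2]
        exact Finset.sum_congr rfl fun i _ => rfl
      have hsum2 : ∑ i, ‖φ x (ξv i) - (WithLp.equiv 2 _) η i‖ ^ 2 = ‖u - η‖ ^ 2 := by
        rw [PiLp.norm_sq_eq_of_L2]
        exact Finset.sum_congr rfl fun i _ => rfl
      rw [hsum1, hsum2] at hx
      have hip : @inner ℝ E _ (v - η) (u - η) ≤ 0 := hchar u huD
      have hexp : ‖u - v‖ ^ 2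
          = ‖u - η‖ ^ 2 - 2 * @inner ℝ E _ (u - η) (v - η) + ‖v - η‖ ^ 2 := by
        have : u - v = (u - η) - (v - η) := by abel
        rw [this, @norm_sub_sq_real E _ _]
      rw [real_inner_comm] at hip
      nlinarith [hε0, hηdist, norm_nonneg (v - η)]
  · -- (2) → (1)
    intro h2
    intro n hn ξ η
    by_cases hTe : ∀ i, T (ξ i) = η i
    · obtain ⟨x⟩ := ‹Nonempty X›
      exact ⟨x, le_of_eq (by simp only [hTe])⟩
    · push_neg at hTe
      obtain ⟨i₀, hi₀⟩ := hTe
      by_contra hc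
      push_neg at hc
      set F : (H → H) → ℝ :=
        fun f => ∑ i, (‖f (ξ i) - T (ξ i)‖ ^ 2 - ‖f (ξ i) - η i‖ ^ 2) with hF
      have hFx : ∀ x : X, 0 < F ⇑(φ x) := by
        intro x
        have h := hc x
        simp only [hF, Finset.sum_sub_distrib]
        linarith
      have hsub : convexHull ℝ (Set.range φ) ⊆ {A : H →L[ℂ] H | 0 ≤ F ⇑A} := by
        apply convexHull_min
        · rintro _ ⟨x, rfl⟩; exact (hFx x).le
        · intro A hA B hB a b ha hb hab
          have key : F ⇑(a • A + b • B) = a * F ⇑A + b * F ⇑B := by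
            simp only [hF, Finset.mul_sum, ← Finset.sum_add_distrib]
            refine Finset.sum_congr rfl fun i _ => ?_
            rw [aux_sq_diff, aux_sq_diff, aux_sq_diff]
            have hpt : (a • A + b • B) (ξ i) = a • A (ξ i) + b • B (ξ i) := by simp
            rw [hpt, aux_affine]
            linear_combination (‖η i‖ ^ 2 - ‖T (ξ i)‖ ^ 2) * hab
          rw [Set.mem_setOf_eq, key]
          exact add_nonneg (mul_nonneg ha hA) (mul_nonneg hb hB)
      have hclosed : IsClosed {f : H → H | 0 ≤ F f} := by
        apply isClosed_le continuous_const
        apply continuous_finset_sum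
        intro i _
        exact (((continuous_apply (ξ i)).sub continuous_const).norm.pow 2).sub
          (((continuous_apply (ξ i)).sub continuous_const).norm.pow 2)
      have hP : 0 ≤ F ⇑T := by
        refine closure_minimal ?_ hclosed h2
        rintro _ ⟨A, hA, rfl⟩
        exact hsub hA
      have hFT : F ⇑T < 0 := by
        have : F ⇑T = -∑ i, ‖T (ξ i) - η i‖ ^ 2 := by
          simp [hF, Finset.sum_sub_distrib]
        rw [this, neg_lt_zero]
        refine Finset.sum_pos' (fun i _ => by positivity) ⟨i₀, Finset.mem_univ _, ?_⟩
        have h0 : 0 < ‖T (ξ i₀) - η i₀‖ := norm_pos_iff.mpr (sub_ne_zero_of_ne hi₀)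
        positivity
      linarith
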